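/- An element t ∈ H is a left integral (ht = ε(h)t for all h) if and only if t₁ ⊗ ht₂ = S(h)t₁ ⊗ t₂ for all h ∈ H. -/

import Mathlib

open TensorProduct LinearMap

noncomputable section

variable (k : Type*) [Field k]
variable (H : Type*) [Ring H] [HopfAlgebra k H]
variable (A : Type*) [Ring A] [Algebra k A]

/-- A left partial action of a Hopf algebra `H` on an algebra `A` (Caenepeel–Janssen):
(PA1) `h·(ab) = (h₁·a)(h₂·b)`, (PA2) `1·a = a`, (PA3) `h·(g·a) = (h₁·1)((h₂g)·a)`. -/
structure PartialAction where
  act : H →ₗ[k] A →ₗ[k] A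
  pa1 : ∀ a b : A, act.flip (a * b) =
    LinearMap.mul' k A ∘ₗ TensorProduct.map (act.flip a) (act.flip b) ∘ₗ Coalgebra.comul
  pa2 : ∀ a : A, act 1 a = a
  pa3 : ∀ (g : H) (a : A), act.flip (act g a) =
    LinearMap.mul' k A ∘ₗ
      TensorProduct.map (act.flip 1) ((act.flip a) ∘ₗ LinearMap.mulRight k g) ∘ₗ Coalgebra.comul

variable {k H A}

/-- (PA4): the partial action is symmetric: `h·(g·a) = ((h₁g)·a)(h₂·1)`. -/
def PartialAction.IsSymmetric (α : PartialAction k H A) : Prop :=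
  ∀ (g : H) (a : A), α.act.flip (α.act g a) =
    LinearMap.mul' k A ∘ₗ
      TensorProduct.map ((α.act.flip a) ∘ₗ LinearMap.mulRight k g) (α.act.flip 1) ∘ₗ
        Coalgebra.comul

/-- Left invariants `A^H`. -/
def PartialAction.leftInv (α : PartialAction k H A) : Set A :=
  {a | ∀ h : H, α.act h a = a * α.act h 1}

/-- Right invariants `A^{H,r}`. -/
def PartialAction.rightInv (α : PartialAction k H A) : Set A :=
  {a | ∀ h : H, α.act h a = α.act h 1 * a}

/-- `t` is a left integral in `H`. -/
def IsLeftIntegral (t : H) : Prop := ∀ h : H, h * t = Coalgebra.counit (R := k) h • t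

/-- `t` is a right integral in `H`. -/
def IsRightIntegral (t : H) : Prop := ∀ h : H, t * h = Coalgebra.counit (R := k) h • t

/-- Convolution product on the dual `H* = H →ₗ[k] k`. -/
def conv (f g : H →ₗ[k] k) : H →ₗ[k] k :=
  LinearMap.mul' k k ∘ₗ TensorProduct.map f g ∘ₗ Coalgebra.comul

/-- `T ∈ H*` is a right integral: `T ∗ f = f(1) T`. -/
def IsRightIntegralDual (T : H →ₗ[k] k) : Prop := ∀ f : H →ₗ[k] k, conv T f = f 1 • T

/-- `T ∈ H*` is a left integral: `f ∗ T = f(1) T`. -/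
def IsLeftIntegralDual (T : H →ₗ[k] k) : Prop := ∀ f : H →ₗ[k] k, conv f T = f 1 • T

namespace PartialAction

variable (α : PartialAction k H A)

/-- `ψ (h ⊗ b) = Σ (h₁·b) ⊗ h₂`. -/
def psi : H ⊗[k] A →ₗ[k] A ⊗[k] H :=
  TensorProduct.map (TensorProduct.lift α.act) LinearMap.id
    ∘ₗ (TensorProduct.assoc k H A H).symm.toLinearMap
    ∘ₗ TensorProduct.map LinearMap.id (TensorProduct.comm k H A).toLinearMap
    ∘ₗ (TensorProduct.assoc k H H A).toLinearMap
    ∘ₗ TensorProduct.map Coalgebra.comul LinearMap.id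

/-- The smash product multiplication on `A ⊗ H`:
`(a # h)(b # g) = a(h₁·b) # h₂g`, as a linear map on the tensor square. -/
def smashMul' : (A ⊗[k] H) ⊗[k] (A ⊗[k] H) →ₗ[k] A ⊗[k] H :=
  TensorProduct.map (LinearMap.mul' k A) (LinearMap.mul' k H)
    ∘ₗ (TensorProduct.assoc k A A (H ⊗[k] H)).symm.toLinearMap
    ∘ₗ TensorProduct.map LinearMap.id
        ((TensorProduct.assoc k A H H).toLinearMap
          ∘ₗ TensorProduct.map α.psi LinearMap.id
          ∘ₗ (TensorProduct.assoc k H A H).symm.toLinearMap)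
    ∘ₗ (TensorProduct.assoc k A H (A ⊗[k] H)).toLinearMap

/-- The smash product multiplication, curried. -/
def sm : (A ⊗[k] H) →ₗ[k] (A ⊗[k] H) →ₗ[k] A ⊗[k] H := TensorProduct.curry α.smashMul'

/-- `1 # 1`. -/
def unit : A ⊗[k] H := (1 : A) ⊗ₜ[k] (1 : H)

/-- `j x = x · (1 # 1)`; the element `a #̲ h` of the partial smash product. -/
def j : A ⊗[k] H →ₗ[k] A ⊗[k] H := α.sm.flip (unit)

/-- The partial smash product `A #̲ H`, as a subspace of `A ⊗ H`. -/
def smash : Submodule k (A ⊗[k] H) := LinearMap.range α.j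

/-- The action of `A # H` on `A`: `(a # h) ▸ b = a (h·b)`. -/
def act2 : A ⊗[k] H →ₗ[k] A →ₗ[k] A :=
  TensorProduct.curry (LinearMap.mul' k A
    ∘ₗ TensorProduct.map LinearMap.id (TensorProduct.lift α.act)
    ∘ₗ (TensorProduct.assoc k A H A).toLinearMap)

end PartialAction

/-- `Φ(a # h) = a T(h)`. -/
def PhiMap (T : H →ₗ[k] k) : A ⊗[k] H →ₗ[k] A :=
  (TensorProduct.rid k A).toLinearMap ∘ₗ TensorProduct.map LinearMap.id T

/-- `θ(f) = f(t₁) t₂`. -/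
def thetaMap (t : H) : (H →ₗ[k] k) →ₗ[k] H :=
  (TensorProduct.lid k H).toLinearMap
    ∘ₗ LinearMap.applyₗ (Coalgebra.comul (R := k) t)
    ∘ₗ (TensorProduct.mapBilinear (RingHom.id k) H H k H).flip LinearMap.id

lemma aux_sum_counit_smul {h : H} (rh : Coalgebra.Repr k h (H × H)) :
    ∑ j ∈ rh.index, Coalgebra.counit (R := k) (rh.left j) • rh.right j = h := by
  have := Coalgebra.sum_counit_tmul_eq rh
  apply_fun (TensorProduct.lid k H) at this
  simp only [map_sum, TensorProduct.lid_tmul] at this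
  simpa using this

lemma aux_sum_smul_counit {h : H} (rh : Coalgebra.Repr k h (H × H)) :
    ∑ j ∈ rh.index, Coalgebra.counit (R := k) (rh.right j) • rh.left j = h := by
  have := Coalgebra.sum_tmul_counit_eq rh
  apply_fun (TensorProduct.rid k H) at this
  simp only [map_sum, TensorProduct.rid_tmul] at this
  simpa using this

lemma aux_counit_antipode (h : H) :
    Coalgebra.counit (R := k) (HopfAlgebra.antipode (R := k) h) = Coalgebra.counit (R := k) h := by
  obtain rh := Coalgebra.Repr.arbitrary k h
  have h1 := congrArg (Coalgebra.counit (R := k)) (HopfAlgebra.sum_antipode_mul_eq_algebraMap_counit rh)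
  simp only [map_sum, Bialgebra.counit_mul, Bialgebra.counit_algebraMap] at h1
  calc Coalgebra.counit (R := k) (HopfAlgebra.antipode (R := k) h)
      = ∑ j ∈ rh.index, Coalgebra.counit (R := k)
          (HopfAlgebra.antipode (R := k) (rh.left j)) * Coalgebra.counit (R := k) (rh.right j) := by
        conv_lhs => rw [← aux_sum_smul_counit rh]
        simp [map_sum, mul_comm]
    _ = Coalgebra.counit (R := k) h := h1

lemma aux_key (h : H) (rh : Coalgebra.Repr k h (H × H)) (r2 : ∀ j : rh.ι, Coalgebra.Repr k (rh.right j) (H × H)) :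
    ∑ j ∈ rh.index, ∑ m ∈ (r2 j).index,
      (HopfAlgebra.antipode (R := k) (rh.left j) * (r2 j).left m) ⊗ₜ[k] (r2 j).right m
      = (1 : H) ⊗ₜ[k] h := by
  have coas := Coalgebra.sum_tmul_tmul_eq rh (fun j => Coalgebra.Repr.arbitrary k (rh.left j)) r2
  apply_fun (TensorProduct.map
      ((LinearMap.mul' k H) ∘ₗ (HopfAlgebra.antipode (R := k)).rTensor H) LinearMap.id
      ∘ₗ (TensorProduct.assoc k H H H).symm.toLinearMap) at coas
  simp only [map_sum, coe_comp, LinearEquiv.coe_coe, Function.comp_apply, assoc_symm_tmul,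
    map_tmul, rTensor_tmul, mul'_apply, id_coe, id_eq] at coas
  rw [← coas]
  have : ∀ j ∈ rh.index,
      ∑ m ∈ (Coalgebra.Repr.arbitrary k (rh.left j)).index,
        (HopfAlgebra.antipode (R := k) ((Coalgebra.Repr.arbitrary k (rh.left j)).left m) * (Coalgebra.Repr.arbitrary k (rh.left j)).right m)
          ⊗ₜ[k] rh.right j
      = (1 : H) ⊗ₜ[k] (Coalgebra.counit (R := k) (rh.left j) • rh.right j) := by
    intro j _
    rw [← TensorProduct.sum_tmul, HopfAlgebra.sum_antipode_mul_eq_smul]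
    rw [TensorProduct.smul_tmul]
  rw [Finset.sum_congr rfl this, ← TensorProduct.tmul_sum, aux_sum_counit_smul rh]

/-- `t` is a left integral iff `t₁ ⊗ ht₂ = S(h)t₁ ⊗ t₂` for all `h`. -/
theorem leftIntegral_iff_twist
    {k : Type*} [Field k] {H : Type*} [Ring H] [HopfAlgebra k H] (t : H) :
    IsLeftIntegral (k := k) t ↔
      ∀ h : H,
        TensorProduct.map LinearMap.id (LinearMap.mulLeft k h)
            (Coalgebra.comul (R := k) t) =
          TensorProduct.map (LinearMap.mulLeft k (HopfAlgebra.antipode (R := k) h))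
            LinearMap.id (Coalgebra.comul (R := k) t) := by

  classical
  constructor
  · intro hint h
    set S : H →ₗ[k] H := HopfAlgebra.antipode (R := k) with hS
    obtain rh := Coalgebra.Repr.arbitrary k h
    set r2 := fun j : rh.ι => Coalgebra.Repr.arbitrary k (rh.right j) with hr2
    have mulL : ∀ u : H ⊗[k] H, ((1 : H) ⊗ₜ[k] h) * u
        = TensorProduct.map LinearMap.id (LinearMap.mulLeft k h) u := by
      intro u
      induction u using TensorProduct.induction_on with
      | zero => simp
      | tmul a b => simp [Algebra.TensorProduct.tmul_mul_tmul]
      | add x y hx hy => simp [mul_add, hx, hy]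
    have mulR : ∀ u : H ⊗[k] H, ((S h) ⊗ₜ[k] (1 : H)) * u
        = TensorProduct.map (LinearMap.mulLeft k (S h)) LinearMap.id u := by
      intro u
      induction u using TensorProduct.induction_on with
      | zero => simp
      | tmul a b => simp [Algebra.TensorProduct.tmul_mul_tmul]
      | add x y hx hy => simp [mul_add, hx, hy]
    have step : (∑ j ∈ rh.index, ((S (rh.left j)) ⊗ₜ[k] (1 : H))
        * Coalgebra.comul (R := k) (rh.right j)) = (1 : H) ⊗ₜ[k] h := by
      rw [← aux_key h rh r2]
      refine Finset.sum_congr rfl fun j _ => ?_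
      rw [← (r2 j).eq, Finset.mul_sum]
      exact Finset.sum_congr rfl fun m _ => by
        rw [Algebra.TensorProduct.tmul_mul_tmul, one_mul]
    have E1 : ∑ j ∈ rh.index, ((S (rh.left j)) ⊗ₜ[k] (1 : H))
          * Coalgebra.comul (R := k) (rh.right j * t)
        = TensorProduct.map LinearMap.id (LinearMap.mulLeft k h)
            (Coalgebra.comul (R := k) t) := by
      calc ∑ j ∈ rh.index, ((S (rh.left j)) ⊗ₜ[k] (1 : H))
            * Coalgebra.comul (R := k) (rh.right j * t)
          = (∑ j ∈ rh.index, ((S (rh.left j)) ⊗ₜ[k] (1 : H))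
              * Coalgebra.comul (R := k) (rh.right j)) * Coalgebra.comul (R := k) t := by
            rw [Finset.sum_mul]
            exact Finset.sum_congr rfl fun j _ => by
              rw [Bialgebra.comul_mul, mul_assoc]
        _ = ((1 : H) ⊗ₜ[k] h) * Coalgebra.comul (R := k) t := by rw [step]
        _ = _ := mulL _
    have E2 : ∑ j ∈ rh.index, ((S (rh.left j)) ⊗ₜ[k] (1 : H))
          * Coalgebra.comul (R := k) (rh.right j * t)
        = TensorProduct.map (LinearMap.mulLeft k (S h)) LinearMap.id
            (Coalgebra.comul (R := k) t) := by
      calc ∑ j ∈ rh.index, ((S (rh.left j)) ⊗ₜ[k] (1 : H))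
            * Coalgebra.comul (R := k) (rh.right j * t)
          = ∑ j ∈ rh.index, ((Coalgebra.counit (R := k) (rh.right j) • S (rh.left j))
              ⊗ₜ[k] (1 : H)) * Coalgebra.comul (R := k) t := by
            refine Finset.sum_congr rfl fun j _ => ?_
            rw [hint (rh.right j), map_smul, mul_smul_comm, ← TensorProduct.smul_tmul',
              smul_mul_assoc]
        _ = ((S h) ⊗ₜ[k] (1 : H)) * Coalgebra.comul (R := k) t := by
            rw [← Finset.sum_mul, ← TensorProduct.sum_tmul]
            have hsum : (∑ a ∈ rh.index,
                Coalgebra.counit (R := k) (rh.right a) • S (rh.left a)) = S h := by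
              conv_rhs => rw [← aux_sum_smul_counit rh]
              rw [map_sum]
              simp
            rw [hsum]
        _ = _ := mulR _
    rw [← E1, E2]
  · intro hyp h
    obtain rt := Coalgebra.Repr.arbitrary k t
    have this1 := hyp h
    rw [← rt.eq] at this1
    apply_fun (fun u => TensorProduct.lid k H
      ((Coalgebra.counit (R := k) : H →ₗ[k] k).rTensor H u)) at this1
    simp only [map_sum, TensorProduct.map_tmul, LinearMap.rTensor_tmul,
      LinearMap.id_coe, id_eq, LinearMap.mulLeft_apply, TensorProduct.lid_tmul,
      Bialgebra.counit_mul, aux_counit_antipode, mul_smul] at this1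
    calc h * t = h * ∑ i ∈ rt.index, Coalgebra.counit (R := k) (rt.left i) • rt.right i := by
          rw [aux_sum_counit_smul rt]
      _ = ∑ i ∈ rt.index, Coalgebra.counit (R := k) (rt.left i) • (h * rt.right i) := by
          rw [Finset.mul_sum]; exact Finset.sum_congr rfl fun i _ => mul_smul_comm _ _ _
      _ = ∑ i ∈ rt.index, Coalgebra.counit (R := k) h •
            Coalgebra.counit (R := k) (rt.left i) • rt.right i := this1
      _ = Coalgebra.counit (R := k) h • t := by
          rw [← Finset.smul_sum, aux_sum_counit_smul rt]


end
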